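/- Nontermination Is Sequential (environment semantics): for a program P, there exists a value v with P:[] ⇓ v if and only if there is no infinite call chain P:[] = e₀:ρ₀ → e₁:ρ₁ → e₂:ρ₂ → … in the environment-based call relation. -/
import Mathlib


/- Untyped λ-expressions. -/
inductive Exp : Type
  | var : String → Exp
  | app : Exp → Exp → Exp
  | lam : String → Exp → Exp
deriving DecidableEq

namespace Exp

/-- Free variables. -/
def fv : Exp → Finset String
  | var x => {x}
  | app e1 e2 => fv e1 ∪ fv e2
  | lam x e => fv e \ {x}

/-- The set of subexpressions of a λ-expression. -/
def subexp : Exp → Set Exp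
  | var x => {var x}
  | app e1 e2 => insert (app e1 e2) (subexp e1 ∪ subexp e2)
  | lam x e => insert (lam x e) (subexp e)

end Exp

/- Values (closures), environments and states of the environment-based
semantics.  An environment is a (partial) map from variable names to values;
a state `e:ρ` pairs an expression with an environment. -/
inductive Val : Type
  | clos : String → Exp → (String → Option Val) → Val

abbrev Env := String → Option Val
abbrev State := Exp × Env

/-- A value `λx.e:ρ` viewed as a state. -/
def Val.toState : Val → State
  | .clos x e ρ => (Exp.lam x e, ρ)

/-- The λ-expression component of a value. -/
def Val.toExp : Val → Exp
  | .clos x e _ => Exp.lam x e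

def Env.update (ρ : Env) (x : String) (v : Val) : Env :=
  fun y => if y = x then some v else ρ y

def Env.empty : Env := fun _ => none
/- Environment-based evaluation `s ⇓ v` and the call relations
`→r` (Operator), `→d` (Operand), `→c` (Call); (Apply) evaluates an
application via its `→c` call. -/
mutual
  inductive EvalE : State → Val → Prop
    | value (x : String) (e : Exp) (ρ : Env) :
        EvalE (Exp.lam x e, ρ) (Val.clos x e ρ)
    | var {ρ : Env} {x : String} {v : Val} :
        ρ x = some v → EvalE (Exp.var x, ρ) v
    | apply {s s' : State} {v : Val} :
        CallC s s' → EvalE s' v → EvalE s v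
  inductive CallC : State → State → Prop
    | call {e1 e2 : Exp} {ρ ρ0 : Env} {x : String} {e0 : Exp} {v2 : Val} :
        EvalE (e1, ρ) (Val.clos x e0 ρ0) → EvalE (e2, ρ) v2 →
        CallC (Exp.app e1 e2, ρ) (e0, Env.update ρ0 x v2)
end

inductive CallR : State → State → Prop
  | oper (e1 e2 : Exp) (ρ : Env) : CallR (Exp.app e1 e2, ρ) (e1, ρ)

inductive CallD : State → State → Prop
  | opnd {e1 : Exp} {ρ : Env} {v1 : Val} (e2 : Exp) :
      EvalE (e1, ρ) v1 → CallD (Exp.app e1 e2, ρ) (e2, ρ)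

/-- The call relation `→` on states is `→r ∪ →d ∪ →c`. -/
def Call (s s' : State) : Prop := CallR s s' ∨ CallD s s' ∨ CallC s s'

/-! Auxiliary development -/

/-- reversed call relation -/
def RCall (a b : State) : Prop := Call b a

/-- Determinism of evaluation. -/
theorem EvalE.det : ∀ {s : State} {v : Val}, EvalE s v → ∀ v', EvalE s v' → v = v' := by
  intro s v h
  refine EvalE.rec (motive_1 := fun s v _ => ∀ v', EvalE s v' → v = v')
    (motive_2 := fun s s' _ => ∀ s'', CallC s s'' → s' = s'') ?_ ?_ ?_ ?_ h
  · intro x e ρ v' hv'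
    cases hv' with
    | value => rfl
    | apply hc _ => cases hc
  · intro ρ x v hx v' hv'
    cases hv' with
    | var hx' => rw [hx] at hx'; exact Option.some.inj hx'
    | apply hc _ => cases hc
  · intro s s' v hc he ihc ihe v' hv'
    cases hc with
    | call h1 h2 =>
      cases hv' with
      | apply hc' he' =>
        have := ihc _ hc'
        exact ihe v' (this ▸ he')
  · intro e1 e2 ρ ρ0 x e0 v2 h1 h2 ih1 ih2 s'' hc
    cases hc with
    | call h1' h2' =>
      have hcl := ih1 _ h1'
      have hv := ih2 _ h2'
      cases hcl
      cases hv
      rfl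

theorem CallC.det {s s' s'' : State} (h : CallC s s') (h' : CallC s s'') : s' = s'' := by
  cases h with
  | call h1 h2 =>
    cases h' with
    | call h1' h2' =>
      have hcl := EvalE.det h1 _ h1'
      have hv := EvalE.det h2 _ h2'
      cases hcl
      cases hv
      rfl

/-- Evaluation implies accessibility for the reversed call relation. -/
theorem EvalE.acc : ∀ {s : State} {v : Val}, EvalE s v → Acc RCall s := by
  intro s v h
  refine EvalE.rec (motive_1 := fun s v _ => Acc RCall s)
    (motive_2 := fun s s' _ => Acc RCall s' → Acc RCall s) ?_ ?_ ?_ ?_ h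
  · intro x e ρ
    constructor
    intro y hy
    rcases hy with hy | hy | hy <;> cases hy
  · intro ρ x v _
    constructor
    intro y hy
    rcases hy with hy | hy | hy <;> cases hy
  · intro s s' v hc he ihc ihe
    exact ihc ihe
  · intro e1 e2 ρ ρ0 x e0 v2 h1 h2 ih1 ih2 hacc
    constructor
    intro y hy
    rcases hy with hy | hy | hy
    · cases hy; exact ih1
    · cases hy; exact ih2
    · have := CallC.det (CallC.call h1 h2) hy
      exact this ▸ hacc

/-- Well-formed values: all values stored in the closure environment are
well-formed, and the environment covers the free variables. -/
inductive ValWF : Val → Prop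
  | mk (x : String) (e : Exp) (ρ : Env) :
      (∀ y ∈ (Exp.lam x e).fv, (ρ y).isSome) →
      (∀ y v, ρ y = some v → ValWF v) → ValWF (.clos x e ρ)

def StateWF (s : State) : Prop :=
  (∀ y ∈ s.1.fv, (s.2 y).isSome) ∧ (∀ y v, s.2 y = some v → ValWF v)

theorem stateWF_app_left {e1 e2 : Exp} {ρ : Env} (h : StateWF (Exp.app e1 e2, ρ)) :
    StateWF (e1, ρ) :=
  ⟨fun y hy => h.1 y (by simp [Exp.fv]; exact Or.inl hy), h.2⟩

theorem stateWF_app_right {e1 e2 : Exp} {ρ : Env} (h : StateWF (Exp.app e1 e2, ρ)) :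
    StateWF (e2, ρ) :=
  ⟨fun y hy => h.1 y (by simp [Exp.fv]; exact Or.inr hy), h.2⟩

theorem stateWF_call {x : String} {e0 : Exp} {ρ0 : Env} {v2 : Val}
    (h : ValWF (Val.clos x e0 ρ0)) (hv2 : ValWF v2) :
    StateWF (e0, Env.update ρ0 x v2) := by
  cases h with
  | mk _ _ _ hcov hvals =>
    constructor
    · intro y hy
      by_cases hxy : y = x
      · simp [Env.update, hxy]
      · have : y ∈ (Exp.lam x e0).fv := by
          simp [Exp.fv]; exact ⟨hy, hxy⟩
        have := hcov y this
        simpa [Env.update, hxy] using this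
    · intro y v hv
      by_cases hxy : y = x
      · simp [Env.update, hxy] at hv
        exact hv ▸ hv2
      · simp [Env.update, hxy] at hv
        exact hvals y v hv

/-- Evaluation preserves well-formedness. -/
theorem EvalE.wf : ∀ {s : State} {v : Val}, EvalE s v → StateWF s → ValWF v := by
  intro s v h
  refine EvalE.rec (motive_1 := fun s v _ => StateWF s → ValWF v)
    (motive_2 := fun s s' _ => StateWF s → StateWF s') ?_ ?_ ?_ ?_ h
  · intro x e ρ hwf
    exact ValWF.mk x e ρ hwf.1 hwf.2
  · intro ρ x v hx hwf
    exact hwf.2 x v hx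
  · intro s s' v hc he ihc ihe hwf
    exact ihe (ihc hwf)
  · intro e1 e2 ρ ρ0 x e0 v2 h1 h2 ih1 ih2 hwf
    exact stateWF_call (ih1 (stateWF_app_left hwf)) (ih2 (stateWF_app_right hwf))

theorem CallC.wf {s s' : State} (h : CallC s s') (hwf : StateWF s) : StateWF s' := by
  cases h with
  | call h1 h2 =>
    exact stateWF_call (EvalE.wf h1 (stateWF_app_left hwf)) (EvalE.wf h2 (stateWF_app_right hwf))

/-- Accessibility plus well-formedness implies evaluation. -/
theorem eval_of_acc : ∀ s : State, Acc RCall s → StateWF s → ∃ v, EvalE s v := by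
  intro s h
  induction h with
  | intro s _ ih =>
    intro hwf
    obtain ⟨e, ρ⟩ := s
    cases e with
    | var x =>
      have := hwf.1 x (by simp [Exp.fv])
      obtain ⟨v, hv⟩ := Option.isSome_iff_exists.mp this
      exact ⟨v, EvalE.var hv⟩
    | lam x e => exact ⟨_, EvalE.value x e ρ⟩
    | app e1 e2 =>
      obtain ⟨v1, hv1⟩ := ih (e1, ρ) (Or.inl (CallR.oper e1 e2 ρ)) (stateWF_app_left hwf)
      obtain ⟨x, e0, ρ0⟩ := v1
      obtain ⟨v2, hv2⟩ := ih (e2, ρ) (Or.inr (Or.inl (CallD.opnd e2 hv1)))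
        (stateWF_app_right hwf)
      have hc : CallC (Exp.app e1 e2, ρ) (e0, Env.update ρ0 x v2) := CallC.call hv1 hv2
      obtain ⟨v, hv⟩ := ih _ (Or.inr (Or.inr hc)) (CallC.wf hc hwf)
      exact ⟨v, EvalE.apply hc hv⟩

theorem acc_no_chain {s : State} (h : Acc RCall s) :
    ∀ f : ℕ → State, (∀ n, Call (f n) (f (n + 1))) → f 0 ≠ s := by
  induction h with
  | intro a _ ih =>
    intro f hf h0
    exact ih (f 1) (h0 ▸ hf 0) (fun n => f (n + 1)) (fun n => hf (n + 1)) rfl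

theorem acc_of_no_chain (s : State)
    (h : ¬ ∃ f : ℕ → State, f 0 = s ∧ ∀ n, Call (f n) (f (n + 1))) : Acc RCall s := by
  by_contra hacc
  apply h
  have step : ∀ a : State, ¬ Acc RCall a → ∃ b, Call a b ∧ ¬ Acc RCall b := by
    intro a ha
    by_contra hb
    push_neg at hb
    exact ha ⟨a, fun y hy => hb y hy⟩
  let g : {a : State // ¬ Acc RCall a} → {a : State // ¬ Acc RCall a} := fun p =>
    ⟨Classical.choose (step p.1 p.2), (Classical.choose_spec (step p.1 p.2)).2⟩
  let F : ℕ → {a : State // ¬ Acc RCall a} := fun n => g^[n] ⟨s, hacc⟩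
  refine ⟨fun n => (F n).1, rfl, fun n => ?_⟩
  have : F (n + 1) = g (F n) := Function.iterate_succ_apply' g n _
  show Call (F n).1 (F (n + 1)).1
  rw [this]
  exact (Classical.choose_spec (step (F n).1 (F n).2)).1

/-- NIS (Nontermination Is Sequential), environment semantics: a program `P`
evaluates (from the empty environment) to some value iff there is no infinite
call chain starting at `P:[]`. -/
theorem nontermination_is_sequential_env (P : Exp) (hP : P.fv = ∅) :
    (∃ v, EvalE (P, Env.empty) v) ↔
      ¬ ∃ f : ℕ → State, f 0 = (P, Env.empty) ∧ ∀ n, Call (f n) (f (n + 1)) := by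
  constructor
  · rintro ⟨v, hv⟩ ⟨f, h0, hf⟩
    exact acc_no_chain hv.acc f hf h0
  · intro h
    refine eval_of_acc _ (acc_of_no_chain _ h) ⟨?_, ?_⟩
    · intro y hy
      simp only [hP] at hy
      exact absurd hy (Finset.notMem_empty y)
    · intro y v hv
      simp [Env.empty] at hv
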